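/- Fix b ∈ ℝ and Δt > 0 with bΔt ∉ πℤ, and let n ∈ ℤ be such that |bΔt − 2πn| < π. Define w(ν) = (ν − bΔt)(cos ν − 1)/sin ν on the open interval I between 2πn and bΔt. Then w(ν) > 0 for all ν in the interior of I, and w(ν) → 0 as ν approaches either endpoint of I. -/

import Mathlib

theorem stmt_11 (b Δt : ℝ) (hΔt : 0 < Δt)
    (hbt : ¬∃ k : ℤ, b * Δt = k * Real.pi)
    (n : ℤ) (hn : |b * Δt - 2 * Real.pi * n| < Real.pi)
    (w : ℝ → ℝ)
    (hw : ∀ ν, w ν = (ν - b * Δt) * (Real.cos ν - 1) / Real.sin ν)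
    (lo hi : ℝ) (hlo : lo = min (2 * Real.pi * n) (b * Δt))
    (hhi : hi = max (2 * Real.pi * n) (b * Δt)) :
    (∀ ν ∈ Set.Ioo lo hi, 0 < w ν) ∧
    Filter.Tendsto w (nhdsWithin lo (Set.Ioo lo hi)) (nhds 0) ∧
    Filter.Tendsto w (nhdsWithin hi (Set.Ioo lo hi)) (nhds 0) := by
  have hπ := Real.pi_pos
  set a : ℝ := 2 * Real.pi * n with ha
  set c : ℝ := b * Δt with hc
  have hca : c ≠ a := by
    intro h
    exact hbt ⟨2 * n, by push_cast; rw [h, ha]; ring⟩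
  -- sin nonzero / sign on the interior
  have hsin_pos : ∀ ν, a < ν → ν < c → 0 < Real.sin ν := by
    intro ν h1 h2
    have hca' : c - a < Real.pi := by
      rcases abs_lt.1 hn with ⟨_, h⟩; linarith
    have : Real.sin ν = Real.sin (ν - a) := by
      rw [show ν = (ν - a) + (n : ℝ) * (2 * Real.pi) by rw [ha]; ring,
        Real.sin_add_int_mul_two_pi]
      ring_nf
      congr 1; rw [ha]; ring
    rw [this]
    exact Real.sin_pos_of_pos_of_lt_pi (by linarith) (by linarith)
  have hsin_neg : ∀ ν, c < ν → ν < a → Real.sin ν < 0 := by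
    intro ν h1 h2
    have hca' : a - c < Real.pi := by
      rcases abs_lt.1 hn with ⟨h, _⟩; linarith
    have : Real.sin ν = -Real.sin (a - ν) := by
      rw [show a - ν = -(ν - a) by ring, Real.sin_neg, neg_neg,
        show ν = (ν - a) + (n : ℝ) * (2 * Real.pi) by rw [ha]; ring,
        Real.sin_add_int_mul_two_pi]
      ring_nf
      congr 1; rw [ha]; ring
    rw [this]
    have : 0 < Real.sin (a - ν) :=
      Real.sin_pos_of_pos_of_lt_pi (by linarith) (by linarith)
    linarith
  have hcos_lt : ∀ ν : ℝ, Real.sin ν ≠ 0 → Real.cos ν < 1 := by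
    intro ν hs
    refine lt_of_le_of_ne (Real.cos_le_one ν) fun h => hs ?_
    nlinarith [Real.sin_sq_add_cos_sq ν]
  -- the identity w = g off the zeros of sin
  have hweq : ∀ ν : ℝ, Real.sin ν ≠ 0 → w ν = -(ν - c) * Real.tan (ν / 2) := by
    intro ν hs
    have hsin2 : Real.sin ν = 2 * Real.sin (ν / 2) * Real.cos (ν / 2) := by
      rw [← Real.sin_two_mul]; ring_nf
    have hcos2 : Real.cos ν = 2 * Real.cos (ν / 2) ^ 2 - 1 := by
      rw [← Real.cos_two_mul]; ring_nf
    have hc2 : Real.cos (ν / 2) ≠ 0 := by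
      intro h; apply hs; rw [hsin2, h]; ring
    have hsq : Real.sin (ν / 2) ^ 2 = 1 - Real.cos (ν / 2) ^ 2 := by
      nlinarith [Real.sin_sq_add_cos_sq (ν / 2)]
    have hs2 : Real.sin (ν / 2) ≠ 0 := by
      intro h; apply hs; rw [hsin2, h]; ring
    have hnum : Real.cos ν - 1 = -(2 * Real.sin (ν / 2) ^ 2) := by
      rw [hcos2]; nlinarith [Real.sin_sq_add_cos_sq (ν / 2)]
    rw [hw, Real.tan_eq_sin_div_cos, hnum, hsin2]
    field_simp
  constructor
  · -- positivity
    intro ν hν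
    rcases lt_or_gt_of_ne hca with h | h
    · -- c < a : lo = c, hi = a
      have hlo' : lo = c := by rw [hlo, min_eq_right h.le]
      have hhi' : hi = a := by rw [hhi, max_eq_left h.le]
      have h1 : c < ν := hlo' ▸ hν.1
      have h2 : ν < a := hhi' ▸ hν.2
      have hs := hsin_neg ν h1 h2
      have hc1 := hcos_lt ν (ne_of_lt hs)
      rw [hw]
      exact div_pos_of_neg_of_neg
        (mul_neg_of_pos_of_neg (by linarith) (by linarith)) hs
    · -- a < c : lo = a, hi = c
      have hlo' : lo = a := by rw [hlo, min_eq_left h.le]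
      have hhi' : hi = c := by rw [hhi, max_eq_right h.le]
      have h1 : a < ν := hlo' ▸ hν.1
      have h2 : ν < c := hhi' ▸ hν.2
      have hs := hsin_pos ν h1 h2
      have hc1 := hcos_lt ν (ne_of_gt hs)
      rw [hw]
      exact div_pos (mul_pos_of_neg_of_neg (by linarith) (by linarith)) hs
  · -- limits at endpoints
    have hEq : w =ᶠ[nhdsWithin lo (Set.Ioo lo hi)] fun ν => -(ν - c) * Real.tan (ν / 2) := by
      filter_upwards [self_mem_nhdsWithin] with ν hν
      rcases lt_or_gt_of_ne hca with h | h
      · have hlo' : lo = c := by rw [hlo, min_eq_right h.le]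
        have hhi' : hi = a := by rw [hhi, max_eq_left h.le]
        exact hweq ν (ne_of_lt (hsin_neg ν (hlo' ▸ hν.1) (hhi' ▸ hν.2)))
      · have hlo' : lo = a := by rw [hlo, min_eq_left h.le]
        have hhi' : hi = c := by rw [hhi, max_eq_right h.le]
        exact hweq ν (ne_of_gt (hsin_pos ν (hlo' ▸ hν.1) (hhi' ▸ hν.2)))
    have hEq' : w =ᶠ[nhdsWithin hi (Set.Ioo lo hi)] fun ν => -(ν - c) * Real.tan (ν / 2) := by
      filter_upwards [self_mem_nhdsWithin] with ν hν
      rcases lt_or_gt_of_ne hca with h | h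
      · have hlo' : lo = c := by rw [hlo, min_eq_right h.le]
        have hhi' : hi = a := by rw [hhi, max_eq_left h.le]
        exact hweq ν (ne_of_lt (hsin_neg ν (hlo' ▸ hν.1) (hhi' ▸ hν.2)))
      · have hlo' : lo = a := by rw [hlo, min_eq_left h.le]
        have hhi' : hi = c := by rw [hhi, max_eq_right h.le]
        exact hweq ν (ne_of_gt (hsin_pos ν (hlo' ▸ hν.1) (hhi' ▸ hν.2)))
    -- continuity of g at a and c, with value 0
    have hcos_a : Real.cos (a / 2) ≠ 0 := by
      intro h
      have : Real.sin (a / 2) = 0 := by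
        rw [show a / 2 = (n : ℝ) * Real.pi by rw [ha]; ring, Real.sin_int_mul_pi]
      nlinarith [Real.sin_sq_add_cos_sq (a / 2)]
    have hcos_c : Real.cos (c / 2) ≠ 0 := by
      intro h
      rcases Real.cos_eq_zero_iff.1 h with ⟨k, hk⟩
      exact hbt ⟨2 * k + 1, by push_cast; linarith⟩
    have hg : ∀ p : ℝ, Real.cos (p / 2) ≠ 0 →
        ContinuousAt (fun ν => -(ν - c) * Real.tan (ν / 2)) p := by
      intro p hp
      have h1 : ContinuousAt (fun ν : ℝ => ν / 2) p := by fun_prop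
      have h2 : ContinuousAt Real.tan (p / 2) := Real.continuousAt_tan.2 hp
      have h3 : ContinuousAt (fun ν : ℝ => Real.tan (ν / 2)) p := ContinuousAt.comp (f := fun ν : ℝ => ν / 2) h2 h1
      exact ((continuousAt_id.sub continuousAt_const).neg).mul h3
    have hga : (fun ν => -(ν - c) * Real.tan (ν / 2)) a = 0 := by
      simp only
      rw [show a / 2 = (n : ℝ) * Real.pi by rw [ha]; ring,
        Real.tan_eq_sin_div_cos, Real.sin_int_mul_pi]
      simp
    have hgc : (fun ν => -(ν - c) * Real.tan (ν / 2)) c = 0 := by simp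
    have key : ∀ p : ℝ, (p = a ∨ p = c) →
        Filter.Tendsto (fun ν => -(ν - c) * Real.tan (ν / 2))
          (nhdsWithin p (Set.Ioo lo hi)) (nhds 0) := by
      intro p hp
      rcases hp with rfl | rfl
      · exact hga ▸ ((hg a hcos_a).continuousWithinAt (s := Set.Ioo lo hi))
      · exact hgc ▸ ((hg c hcos_c).continuousWithinAt (s := Set.Ioo lo hi))
    have hlo2 : lo = a ∨ lo = c := by
      rcases le_total a c with h | h
      · left; rw [hlo, min_eq_left h]
      · right; rw [hlo, min_eq_right h]
    have hhi2 : hi = a ∨ hi = c := by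
      rcases le_total a c with h | h
      · right; rw [hhi, max_eq_right h]
      · left; rw [hhi, max_eq_left h]
    exact ⟨(key lo hlo2).congr' hEq.symm, (key hi hhi2).congr' hEq'.symm⟩
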